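/- Let h be a symmetric n×n real matrix, let ξ ∈ ℝ^n be nonzero, and let S be a real number. Writing T = ξ·h·ξ, then (1/2)|ξ|⁴|h|² − 2S|ξ|²|h·ξ|² + (S+1/4)T² + (S−1)|ξ|²(tr h)·T + (1/4)|ξ|⁴(tr h)² = (S−1/2)·(−2|ξ|²|h·ξ|² + T² + |ξ|²·T·(tr h)) + |ξ|⁴·((1/2)·tr((h·Π_ξ^⊥)²) + (1/4)·(tr(h·Π_ξ^⊥))²). -/
import Mathlib


open Matrix

/-- Orthogonal projection onto the orthogonal complement of `ξ`:
`Π_ξ^⊥ = I - |ξ|⁻² ξ ξᵀ`. -/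
noncomputable def Pperp {n : ℕ} (ξ : Fin n → ℝ) : Matrix (Fin n) (Fin n) ℝ :=
  1 - (∑ i, ξ i ^ 2)⁻¹ • Matrix.vecMulVec ξ ξ

lemma hA_eq {n : ℕ} (h : Matrix (Fin n) (Fin n) ℝ) (u v : Fin n → ℝ) :
    h * vecMulVec u v = vecMulVec (h.mulVec u) v := by
  ext i j
  simp [mul_apply, vecMulVec_apply, mulVec, dotProduct, Finset.sum_mul, mul_assoc]

lemma tr_vmv {n : ℕ} (u v : Fin n → ℝ) : Matrix.trace (vecMulVec u v) = u ⬝ᵥ v := by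
  simp [trace, vecMulVec_apply, dotProduct]

lemma vmv_mul {n : ℕ} (u v u' v' : Fin n → ℝ) :
    vecMulVec u v * vecMulVec u' v' = (v ⬝ᵥ u') • vecMulVec u v' := by
  ext i j
  simp [mul_apply, vecMulVec_apply, dotProduct, Finset.mul_sum, Finset.sum_mul]
  exact Finset.sum_congr rfl fun k _ => by ring

lemma tr_h2 {n : ℕ} (h : Matrix (Fin n) (Fin n) ℝ) (hsym : h.IsSymm) :
    Matrix.trace (h * h) = ∑ i, ∑ j, (h i j) ^ 2 := by
  simp only [trace, diag_apply, mul_apply]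
  refine Finset.sum_congr rfl fun i _ => Finset.sum_congr rfl fun j _ => ?_
  rw [← hsym.apply i j, sq]

lemma h2xi {n : ℕ} (h : Matrix (Fin n) (Fin n) ℝ) (hsym : h.IsSymm) (ξ : Fin n → ℝ) :
    (h.mulVec (h.mulVec ξ)) ⬝ᵥ ξ = ∑ k, (h.mulVec ξ k) ^ 2 := by
  rw [dotProduct_comm, dotProduct_mulVec, ← Matrix.mulVec_transpose, hsym.eq]
  simp [dotProduct, sq]

theorem stmt10 {n : ℕ} (h : Matrix (Fin n) (Fin n) ℝ) (hsym : h.IsSymm)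
    (ξ : Fin n → ℝ) (hξ : ξ ≠ 0) (S : ℝ) :
    (1 / 2) * (∑ i, ξ i ^ 2) ^ 2 * (∑ i, ∑ j, (h i j) ^ 2) -
        2 * S * (∑ i, ξ i ^ 2) * (∑ k, (h.mulVec ξ k) ^ 2) +
        (S + 1 / 4) * (ξ ⬝ᵥ h.mulVec ξ) ^ 2 +
        (S - 1) * (∑ i, ξ i ^ 2) * Matrix.trace h * (ξ ⬝ᵥ h.mulVec ξ) +
        (1 / 4) * (∑ i, ξ i ^ 2) ^ 2 * (Matrix.trace h) ^ 2 =
      (S - 1 / 2) *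
          (-2 * (∑ i, ξ i ^ 2) * (∑ k, (h.mulVec ξ k) ^ 2) + (ξ ⬝ᵥ h.mulVec ξ) ^ 2 +
            (∑ i, ξ i ^ 2) * (ξ ⬝ᵥ h.mulVec ξ) * Matrix.trace h) +
        (∑ i, ξ i ^ 2) ^ 2 *
          ((1 / 2) * Matrix.trace ((h * Pperp ξ) * (h * Pperp ξ)) +
            (1 / 4) * (Matrix.trace (h * Pperp ξ)) ^ 2) := by
  set q : ℝ := ∑ i, ξ i ^ 2 with hqdef
  have hq : q ≠ 0 := by
    obtain ⟨i, hi⟩ := Function.ne_iff.mp hξ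
    have : 0 < q := Finset.sum_pos' (fun j _ => sq_nonneg (ξ j))
      ⟨i, Finset.mem_univ i, (sq_nonneg (ξ i)).lt_of_ne (Ne.symm (pow_ne_zero 2 hi))⟩
    exact ne_of_gt this
  set w : Fin n → ℝ := h.mulVec ξ with hwdef
  set T : ℝ := ξ ⬝ᵥ w with hTdef
  have hwx : w ⬝ᵥ ξ = T := dotProduct_comm w ξ
  have hxw : ξ ⬝ᵥ w = T := rfl
  have hHP : h * Pperp ξ = h - q⁻¹ • vecMulVec w ξ := by
    rw [Pperp, mul_sub, mul_one, Matrix.mul_smul, hA_eq]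
  have htr1 : Matrix.trace (h * Pperp ξ) = Matrix.trace h - q⁻¹ * T := by
    rw [hHP, trace_sub, trace_smul, tr_vmv, hwx, smul_eq_mul]
  have htr2 : Matrix.trace ((h * Pperp ξ) * (h * Pperp ξ)) =
      (∑ i, ∑ j, (h i j) ^ 2) - 2 * q⁻¹ * (∑ k, w k ^ 2) + q⁻¹ * q⁻¹ * T ^ 2 := by
    rw [hHP, sub_mul, mul_sub, mul_sub, Matrix.smul_mul, Matrix.mul_smul,
      Matrix.smul_mul, Matrix.mul_smul, vmv_mul, hA_eq]
    simp only [trace_sub, trace_smul, smul_eq_mul]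
    rw [tr_h2 h hsym, tr_vmv, h2xi h hsym ξ]
    have : Matrix.trace (vecMulVec w ξ * h) = ∑ k, w k ^ 2 := by
      rw [trace_mul_comm, hA_eq, tr_vmv, h2xi h hsym ξ]
    rw [this, tr_vmv, hwx, hxw, ← hwdef]
    ring
  rw [htr1, htr2]
  field_simp
  ring
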